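/- arXiv:0811.1569 — 3 statements merged into one kernel-verified Lean document; each statement's English description precedes it below -/
import Mathlib

section
/- Let G be an algebraic group over a finite field 𝔽_q with Lie algebra 𝔤, let ρ : G → GL(V) be a representation on a finite-dimensional 𝔽_q-vector space V with derivative ϱ : 𝔤 → 𝔤𝔩(V), and let μ : V × V* → 𝔤* be the moment map defined by ⟨μ(v,w), x⟩ = w(ϱ(x)v). Fix a nontrivial additive character Ψ of 𝔽_q. Then for any ξ ∈ 𝔤*, the number of solutions (v,w) ∈ V × V* of μ(v,w) = ξ equals |𝔤|^{-1}·|V|·∑_{x∈𝔤} |ker(ϱ(x))|·Ψ(⟨x,ξ⟩). -/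
open Finset

private lemma sum_char_linear {K : Type*} [Field K] [Fintype K]
    {A : Type*} [AddCommGroup A] [Module K A] [Fintype A]
    (Ψ' : AddChar K ℂ) (hΨ' : Ψ' ≠ 0) (f : A →ₗ[K] K) [Decidable (f = 0)] :
    ∑ a : A, Ψ' (f a) = if f = 0 then (Fintype.card A : ℂ) else 0 := by
  classical
  have hiff : Ψ'.compAddMonoidHom f.toAddMonoidHom = 0 ↔ f = 0 := by
    constructor
    · intro hc
      by_contra hf
      obtain ⟨a, ha⟩ : ∃ a, f a ≠ 0 := by
        by_contra hno; push_neg at hno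
        exact hf (LinearMap.ext fun a => by simp [hno a])
      obtain ⟨t, ht⟩ := AddChar.ne_zero_iff.1 hΨ'
      have h1 : Ψ' (f ((t / f a) • a)) = 1 := by
        have := DFunLike.congr_fun hc ((t / f a) • a)
        simpa using this
      rw [map_smul, smul_eq_mul, div_mul_cancel₀ _ ha] at h1
      exact ht h1
    · intro hf; ext a; simp [hf]
  have h := AddChar.sum_eq_ite (Ψ'.compAddMonoidHom f.toAddMonoidHom)
  simp only [AddChar.compAddMonoidHom_apply, LinearMap.toAddMonoidHom_coe] at h
  rw [h, if_congr hiff rfl rfl]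

/-- Number of solutions of the moment map equation `μ(v,w) = ξ` over a finite field:
`#{(v,w) : μ(v,w) = ξ} = |𝔤|⁻¹ |V| ∑_{x ∈ 𝔤} |ker ϱ(x)| Ψ(⟨x,ξ⟩)`, where
`⟨μ(v,w), x⟩ = w(ϱ(x)v)`. -/
theorem moment_map_point_count
    (K : Type*) [Field K] [Fintype K]
    (g : Type*) [AddCommGroup g] [Module K g] [FiniteDimensional K g] [Fintype g]
    (V : Type*) [AddCommGroup V] [Module K V] [FiniteDimensional K V] [Fintype V]
    (ϱ : g →ₗ[K] Module.End K V)
    (Ψ : AddChar K ℂˣ) (hΨ : Ψ ≠ 1)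
    (ξ : Module.Dual K g) :
    (Nat.card {p : V × Module.Dual K V // ∀ x : g, p.2 (ϱ x p.1) = ξ x} : ℂ) =
      ((Fintype.card g : ℂ))⁻¹ * (Fintype.card V : ℂ) *
        ∑ x : g, (Nat.card (LinearMap.ker (ϱ x)) : ℂ) * (Ψ (ξ x) : ℂ) := by
  classical
  -- dual of V is finite with the same cardinality
  let e : V ≃ₗ[K] Module.Dual K V := (Module.finBasis K V).toDualEquiv
  haveI : Fintype (Module.Dual K V) := Fintype.ofEquiv V e.toEquiv
  have hcard : Fintype.card (Module.Dual K V) = Fintype.card V :=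
    (Fintype.card_congr e.toEquiv).symm
  -- the ℂ-valued character
  set Ψ' : AddChar K ℂ := (Units.coeHom ℂ).compAddChar Ψ with hΨ'def
  have hΨ'app : ∀ t : K, Ψ' t = (Ψ t : ℂ) := fun t => rfl
  have hΨ' : Ψ' ≠ 0 := by
    obtain ⟨t, ht⟩ := AddChar.ne_one_iff.1 hΨ
    refine AddChar.ne_zero_iff.2 ⟨t, ?_⟩
    rw [hΨ'app]
    exact fun h => ht (Units.ext (by simpa using h))
  have hg0 : (Fintype.card g : ℂ) ≠ 0 := Nat.cast_ne_zero.2 Fintype.card_ne_zero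
  -- the linear functional whose vanishing is the moment map equation
  set F : V × Module.Dual K V → (g →ₗ[K] K) := fun p =>
    ξ - p.2 ∘ₗ (LinearMap.applyₗ p.1 ∘ₗ ϱ) with hFdef
  have hFapp : ∀ p x, F p x = ξ x - p.2 (ϱ x p.1) := fun p x => rfl
  have hcond : ∀ p : V × Module.Dual K V,
      (∀ x : g, p.2 (ϱ x p.1) = ξ x) ↔ F p = 0 := by
    intro p
    rw [LinearMap.ext_iff]
    constructor
    · intro h x; rw [hFapp, h x, sub_self]; rfl
    · intro h x
      have := h x
      rw [hFapp] at this
      simp only [LinearMap.zero_apply] at this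
      exact (sub_eq_zero.mp this).symm
  -- count as a sum of indicators
  have hN : (Nat.card {p : V × Module.Dual K V // ∀ x : g, p.2 (ϱ x p.1) = ξ x} : ℂ)
      = ∑ p : V × Module.Dual K V, if F p = 0 then (1 : ℂ) else 0 := by
    rw [Nat.card_eq_fintype_card, Fintype.card_subtype, Finset.sum_boole]
    norm_cast
    congr 1
    exact Finset.filter_congr fun p _ => by simpa using (hcond p)
  rw [hN]
  -- replace indicator by character sum
  have hind : ∀ p : V × Module.Dual K V,
      (if F p = 0 then (1 : ℂ) else 0)
        = (Fintype.card g : ℂ)⁻¹ * ∑ x : g, Ψ' (F p x) := by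
    intro p
    rw [sum_char_linear Ψ' hΨ' (F p)]
    by_cases h : F p = 0 <;> simp [h, inv_mul_cancel₀ hg0]
  simp_rw [hind]
  rw [← Finset.mul_sum, mul_assoc]
  congr 1
  rw [Finset.sum_comm]
  have hinner : ∀ (u : V), ∑ w : Module.Dual K V, Ψ' (-(w u))
      = if u = 0 then (Fintype.card V : ℂ) else 0 := by
    intro u
    have := sum_char_linear Ψ' hΨ' (-(Module.Dual.eval K V u))
    simp only [LinearMap.neg_apply, Module.Dual.eval_apply] at this
    rw [this, hcard]
    congr 1
    rw [eq_iff_iff, neg_eq_zero]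
    constructor
    · intro h0
      rw [← Module.forall_dual_apply_eq_zero_iff K u]
      intro φ
      simpa using DFunLike.congr_fun h0 φ
    · intro h0; subst h0; simp
  have hx : ∀ x : g, ∑ p : V × Module.Dual K V, Ψ' (F p x)
      = Ψ' (ξ x) * ((Fintype.card V : ℂ) * (Nat.card (LinearMap.ker (ϱ x)) : ℂ)) := by
    intro x
    have : ∀ p : V × Module.Dual K V, Ψ' (F p x) = Ψ' (ξ x) * Ψ' (-(p.2 (ϱ x p.1))) := by
      intro p
      rw [hFapp, sub_eq_add_neg, AddChar.map_add_eq_mul]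
    simp_rw [this, ← Finset.mul_sum]
    congr 1
    rw [Fintype.sum_prod_type]
    simp_rw [hinner]
    rw [Finset.sum_ite, Finset.sum_const_zero, add_zero, Finset.sum_const, nsmul_eq_mul,
      mul_comm]
    congr 1
    rw [Nat.card_eq_fintype_card, Fintype.card_subtype]
    norm_cast
  simp_rw [hx]
  rw [Finset.mul_sum]
  refine Finset.sum_congr rfl fun x _ => ?_
  rw [hΨ'app]
  ring
end

section
/- Let Γ = (I,E) be a quiver, K a field, v,w ∈ ℕ^I dimension vectors with char(K) = 0 or char(K) > ∑_i v_i, and λ ∈ K^×. Suppose (A_e, I_i, B_e, J_i) satisfies the moment map equation I_i J_i + ∑_{e: s(e)=i} B_e A_e − ∑_{e: t(e)=i} A_e B_e = λ·Id_{V_i} for all i ∈ I. If x = (x_i)_{i∈I} with x_i ∈ End(V_i) satisfies x_{t(e)}A_e = A_e x_{s(e)}, x_{s(e)}B_e = B_e x_{t(e)}, x_i I_i = 0 and J_i x_i = 0 for all edges e and vertices i, then x = 0. -/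
open Module

/-- Transport an endomorphism of `V i` to an endomorphism of `V j` along `i = j`. -/
def castEnd {K : Type*} [Field K] {I : Type*} (V : I → Type*)
    [∀ i, AddCommGroup (V i)] [∀ i, Module K (V i)] {i j : I} (h : i = j)
    (f : Module.End K (V i)) : Module.End K (V j) := h ▸ f

/-- Infinitesimal freeness at a solution of the deformed quiver moment map equation:
if `(A,I,B,J)` satisfies `I_i J_i + ∑_{s(e)=i} B_e A_e − ∑_{t(e)=i} A_e B_e = λ·Id` with
`λ ≠ 0` and `char K = 0` or `char K > ∑ᵢ vᵢ`, and `x = (xᵢ)` intertwines the data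
(`x_{t(e)} A_e = A_e x_{s(e)}`, `x_{s(e)} B_e = B_e x_{t(e)}`, `x_i I_i = 0`,
`J_i x_i = 0`), then `x = 0`. -/
theorem quiver_infinitesimal_freeness
    (K : Type*) [Field K]
    (I : Type*) [Fintype I] [DecidableEq I]
    (E : Type*) [Fintype E] (s t : E → I)
    (V : I → Type*) [∀ i, AddCommGroup (V i)] [∀ i, Module K (V i)]
    [∀ i, FiniteDimensional K (V i)]
    (W : I → Type*) [∀ i, AddCommGroup (W i)] [∀ i, Module K (W i)]
    [∀ i, FiniteDimensional K (W i)]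
    (hchar : ringChar K = 0 ∨ (∑ i, Module.finrank K (V i)) < ringChar K)
    (lam : K) (hlam : lam ≠ 0)
    (A : ∀ e : E, V (s e) →ₗ[K] V (t e)) (B : ∀ e : E, V (t e) →ₗ[K] V (s e))
    (II : ∀ i : I, W i →ₗ[K] V i) (J : ∀ i : I, V i →ₗ[K] W i)
    (hmom : ∀ i : I,
      (II i ∘ₗ J i) + (∑ e : E, if h : s e = i then castEnd V h (B e ∘ₗ A e) else 0) -
          (∑ e : E, if h : t e = i then castEnd V h (A e ∘ₗ B e) else 0) =
        lam • (LinearMap.id : Module.End K (V i)))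
    (x : ∀ i : I, Module.End K (V i))
    (hA : ∀ e : E, x (t e) ∘ₗ A e = A e ∘ₗ x (s e))
    (hB : ∀ e : E, x (s e) ∘ₗ B e = B e ∘ₗ x (t e))
    (hI : ∀ i : I, x i ∘ₗ II i = 0)
    (hJ : ∀ i : I, J i ∘ₗ x i = 0) :
    ∀ i : I, x i = 0 := by
  classical
  -- the subrepresentation given by the images of the `x i`
  set U : ∀ i : I, Submodule K (V i) := fun i => LinearMap.range (x i) with hUdef
  have hAmem : ∀ e : E, ∀ u ∈ U (s e), A e u ∈ U (t e) := by
    rintro e _ ⟨v, rfl⟩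
    exact ⟨A e v, LinearMap.ext_iff.1 (hA e) v⟩
  have hBmem : ∀ e : E, ∀ u ∈ U (t e), B e u ∈ U (s e) := by
    rintro e _ ⟨v, rfl⟩
    exact ⟨B e v, LinearMap.ext_iff.1 (hB e) v⟩
  have hJU : ∀ i : I, ∀ u ∈ U i, J i u = 0 := by
    rintro i _ ⟨v, rfl⟩
    simpa using LinearMap.ext_iff.1 (hJ i) v
  -- restricted maps
  let f : ∀ e : E, U (s e) →ₗ[K] U (t e) := fun e => (A e).restrict (hAmem e)
  let g : ∀ e : E, U (t e) →ₗ[K] U (s e) := fun e => (B e).restrict (hBmem e)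
  -- the moment map equation restricted to `U`
  have hpt : ∀ i : I, ∀ u ∈ U i,
      ((∑ e : E, if h : s e = i then castEnd V h (B e ∘ₗ A e) else 0) u)
        - ((∑ e : E, if h : t e = i then castEnd V h (A e ∘ₗ B e) else 0) u)
        = lam • u := by
    intro i u hu
    have h1 := LinearMap.ext_iff.1 (hmom i) u
    simp only [LinearMap.sub_apply, LinearMap.add_apply, LinearMap.comp_apply,
      LinearMap.smul_apply, LinearMap.id_apply] at h1
    rw [hJU i u hu, map_zero, zero_add] at h1
    exact h1
  have key : ∀ i : I,
      ((∑ e : E, if h : s e = i then castEnd (fun j => ↥(U j)) h (g e ∘ₗ f e) else 0)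
        - (∑ e : E, if h : t e = i then castEnd (fun j => ↥(U j)) h (f e ∘ₗ g e) else 0))
        = lam • (LinearMap.id : Module.End K (U i)) := by
    intro i
    apply LinearMap.ext
    rintro ⟨u, hu⟩
    apply Subtype.ext
    have e1 : ∀ e : E,
        (((if h : s e = i then castEnd (fun j => ↥(U j)) h (g e ∘ₗ f e) else 0)
            ⟨u, hu⟩ : U i) : V i)
          = (if h : s e = i then castEnd V h (B e ∘ₗ A e) else 0) u := by
      intro e
      by_cases h : s e = i
      · subst h
        simp [castEnd, f, g, LinearMap.restrict_apply]
      · simp [h]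
    have e2 : ∀ e : E,
        (((if h : t e = i then castEnd (fun j => ↥(U j)) h (f e ∘ₗ g e) else 0)
            ⟨u, hu⟩ : U i) : V i)
          = (if h : t e = i then castEnd V h (A e ∘ₗ B e) else 0) u := by
      intro e
      by_cases h : t e = i
      · subst h
        simp [castEnd, f, g, LinearMap.restrict_apply]
      · simp [h]
    calc (((((∑ e : E, if h : s e = i then castEnd (fun j => ↥(U j)) h (g e ∘ₗ f e) else 0)
            - (∑ e : E, if h : t e = i then castEnd (fun j => ↥(U j)) h (f e ∘ₗ g e) else 0))
            ⟨u, hu⟩ : U i)) : V i)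
        = ((∑ e : E, if h : s e = i then castEnd V h (B e ∘ₗ A e) else 0) u)
            - ((∑ e : E, if h : t e = i then castEnd V h (A e ∘ₗ B e) else 0) u) := by
          simp only [LinearMap.sub_apply, LinearMap.sum_apply, AddSubgroupClass.coe_sub,
            Submodule.coe_sum]
          rw [Finset.sum_congr rfl (fun e _ => e1 e), Finset.sum_congr rfl (fun e _ => e2 e)]
      _ = lam • u := hpt i u hu
      _ = (((lam • (LinearMap.id : Module.End K (U i))) ⟨u, hu⟩ : U i) : V i) := rfl
  -- take traces and sum over vertices
  have htr : ∀ i : I, lam * (finrank K (U i) : K)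
      = (∑ e : E, if h : s e = i then LinearMap.trace K (U (s e)) (g e ∘ₗ f e) else 0)
        - (∑ e : E, if h : t e = i then LinearMap.trace K (U (t e)) (f e ∘ₗ g e) else 0) := by
    intro i
    have h0 := congrArg (LinearMap.trace K (U i)) (key i)
    rw [map_sub, map_sum, map_sum, map_smul, LinearMap.trace_id, smul_eq_mul] at h0
    rw [← h0]
    congr 1 <;> apply Finset.sum_congr rfl <;> intro e _
    · by_cases h : s e = i
      · subst h; simp [castEnd]
      · simp [h]
    · by_cases h : t e = i
      · subst h; simp [castEnd]
      · simp [h]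
  have hsum : lam * ((∑ i, finrank K (U i) : ℕ) : K) = 0 := by
    push_cast
    rw [Finset.mul_sum]
    rw [Finset.sum_congr rfl (fun i _ => htr i), Finset.sum_sub_distrib]
    have d1 : (∑ i : I, ∑ e : E, if h : s e = i then
        LinearMap.trace K (U (s e)) (g e ∘ₗ f e) else 0)
        = ∑ e : E, LinearMap.trace K (U (s e)) (g e ∘ₗ f e) := by
      rw [Finset.sum_comm]
      refine Finset.sum_congr rfl fun e _ => ?_
      simp
    have d2 : (∑ i : I, ∑ e : E, if h : t e = i then
        LinearMap.trace K (U (t e)) (f e ∘ₗ g e) else 0)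
        = ∑ e : E, LinearMap.trace K (U (t e)) (f e ∘ₗ g e) := by
      rw [Finset.sum_comm]
      refine Finset.sum_congr rfl fun e _ => ?_
      simp
    rw [d1, d2,
      Finset.sum_congr rfl (fun e _ => LinearMap.trace_comp_comm' (f e) (g e))]
    exact sub_self _
  have hN : ((∑ i, finrank K (U i) : ℕ) : K) = 0 := by
    rcases mul_eq_zero.1 hsum with h | h
    · exact absurd h hlam
    · exact h
  have hNle : (∑ i, finrank K (U i)) ≤ ∑ i, finrank K (V i) :=
    Finset.sum_le_sum fun i _ => Submodule.finrank_le (U i)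
  have hN0 : (∑ i, finrank K (U i)) = 0 := by
    haveI := ringChar.charP K
    have hdvd : ringChar K ∣ ∑ i, finrank K (U i) :=
      (CharP.cast_eq_zero_iff K (ringChar K) _).1 hN
    rcases hchar with h0 | hlt
    · rw [h0] at hdvd
      exact zero_dvd_iff.1 hdvd
    · by_contra hne
      exact absurd (Nat.le_of_dvd (Nat.pos_of_ne_zero hne) hdvd)
        (not_le.2 (lt_of_le_of_lt hNle hlt))
  intro i
  have : finrank K (U i) = 0 := by
    have := (Finset.sum_eq_zero_iff.1 hN0) i (Finset.mem_univ i)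
    exact this
  have hbot : U i = ⊥ := Submodule.finrank_eq_zero.1 this
  exact LinearMap.range_eq_bot.1 hbot
end

section
/- Let Γ = (I,E) be a quiver, K a field, v,w ∈ ℕ^I with char(K) = 0 or char(K) > ∑_i v_i, and λ ∈ K^×. Suppose (A_e, I_i, B_e, J_i) satisfies the moment map equation I_i J_i + ∑_{e: s(e)=i} B_e A_e − ∑_{e: t(e)=i} A_e B_e = λ·Id_{V_i} for all i. If g = (g_i)_{i∈I} with g_i ∈ GL(V_i) fixes this point, i.e. g_{t(e)} A_e g_{s(e)}^{-1} = A_e, g_{s(e)} B_e g_{t(e)}^{-1} = B_e, g_i I_i = I_i, and J_i g_i^{-1} = J_i for all e, i, then g_i = Id_{V_i} for all i. (The group ∏_i GL(V_i) acts freely on the fiber of the moment map over λ·1.) -/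
open Module

/-- Freeness of the `∏ᵢ GL(Vᵢ)` action at a solution of the deformed quiver moment map
equation: if `(A,I,B,J)` satisfies
`I_i J_i + ∑_{s(e)=i} B_e A_e − ∑_{t(e)=i} A_e B_e = λ·Id` with `λ ≠ 0` and
`char K = 0` or `char K > ∑ᵢ vᵢ`, and `g = (gᵢ)` fixes the point
(`g_{t(e)} A_e g_{s(e)}⁻¹ = A_e`, `g_{s(e)} B_e g_{t(e)}⁻¹ = B_e`, `gᵢ Iᵢ = Iᵢ`,
`Jᵢ gᵢ⁻¹ = Jᵢ`), then `gᵢ = Id` for all `i`. -/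
theorem quiver_moment_map_free_action
    (K : Type*) [Field K]
    (I : Type*) [Fintype I] [DecidableEq I]
    (E : Type*) [Fintype E] (s t : E → I)
    (V : I → Type*) [∀ i, AddCommGroup (V i)] [∀ i, Module K (V i)]
    [∀ i, FiniteDimensional K (V i)]
    (W : I → Type*) [∀ i, AddCommGroup (W i)] [∀ i, Module K (W i)]
    [∀ i, FiniteDimensional K (W i)]
    (hchar : ringChar K = 0 ∨ (∑ i, Module.finrank K (V i)) < ringChar K)
    (lam : K) (hlam : lam ≠ 0)
    (A : ∀ e : E, V (s e) →ₗ[K] V (t e)) (B : ∀ e : E, V (t e) →ₗ[K] V (s e))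
    (II : ∀ i : I, W i →ₗ[K] V i) (J : ∀ i : I, V i →ₗ[K] W i)
    (hmom : ∀ i : I,
      (II i ∘ₗ J i) + (∑ e : E, if h : s e = i then castEnd V h (B e ∘ₗ A e) else 0) -
          (∑ e : E, if h : t e = i then castEnd V h (A e ∘ₗ B e) else 0) =
        lam • (LinearMap.id : Module.End K (V i)))
    (g : ∀ i : I, V i ≃ₗ[K] V i)
    (hA : ∀ e : E, (g (t e)).toLinearMap ∘ₗ A e ∘ₗ (g (s e)).symm.toLinearMap = A e)
    (hB : ∀ e : E, (g (s e)).toLinearMap ∘ₗ B e ∘ₗ (g (t e)).symm.toLinearMap = B e)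
    (hI : ∀ i : I, (g i).toLinearMap ∘ₗ II i = II i)
    (hJ : ∀ i : I, J i ∘ₗ (g i).symm.toLinearMap = J i) :
    ∀ i : I, g i = LinearEquiv.refl K (V i) := by
  classical
  -- intertwining relations in pointwise form
  have hAg : ∀ (e : E) (x : V (s e)), A e (g (s e) x) = g (t e) (A e x) := by
    intro e x
    have := LinearMap.congr_fun (hA e) (g (s e) x)
    simpa using this.symm
  have hBg : ∀ (e : E) (x : V (t e)), B e (g (t e) x) = g (s e) (B e x) := by
    intro e x
    have := LinearMap.congr_fun (hB e) (g (t e) x)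
    simpa using this.symm
  have hJg : ∀ (i : I) (x : V i), J i (g i x) = J i x := by
    intro i x
    have := LinearMap.congr_fun (hJ i) (g i x)
    simpa using this.symm
  -- the key submodules
  set U : ∀ i : I, Submodule K (V i) :=
    fun i => LinearMap.range ((g i).toLinearMap - LinearMap.id) with hU
  have hmemA : ∀ (e : E), ∀ x ∈ U (s e), A e x ∈ U (t e) := by
    intro e x hx
    obtain ⟨y, rfl⟩ := hx
    exact ⟨A e y, by simp [map_sub, hAg]⟩
  have hmemB : ∀ (e : E), ∀ x ∈ U (t e), B e x ∈ U (s e) := by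
    intro e x hx
    obtain ⟨y, rfl⟩ := hx
    exact ⟨B e y, by simp [map_sub, hBg]⟩
  have hJ0 : ∀ (i : I), ∀ x ∈ U i, J i x = 0 := by
    intro i x hx
    obtain ⟨y, rfl⟩ := hx
    simp [map_sub, hJg]
  -- restricted maps
  set A' : ∀ e : E, U (s e) →ₗ[K] U (t e) := fun e => (A e).restrict (hmemA e) with hA'
  set B' : ∀ e : E, U (t e) →ₗ[K] U (s e) := fun e => (B e).restrict (hmemB e) with hB'
  set P : ∀ i : I, Module.End K (U i) := fun i =>
    ∑ e : E, if h : s e = i then castEnd (fun j => ↥(U j)) h (B' e ∘ₗ A' e) else 0 with hP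
  set Q : ∀ i : I, Module.End K (U i) := fun i =>
    ∑ e : E, if h : t e = i then castEnd (fun j => ↥(U j)) h (A' e ∘ₗ B' e) else 0 with hQ
  -- the restricted moment map identity
  have key : ∀ i : I, P i - Q i = lam • (LinearMap.id : Module.End K (U i)) := by
    intro i
    ext u
    have hm := LinearMap.congr_fun (hmom i) (u : V i)
    have hJu : J i (u : V i) = 0 := hJ0 i _ u.2
    have hcoeP : ((P i u : U i) : V i) =
        (∑ e : E, if h : s e = i then castEnd V h (B e ∘ₗ A e) else 0) (u : V i) := by
      rw [hP]
      simp only [LinearMap.sum_apply, Submodule.coe_sum]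
      refine Finset.sum_congr rfl fun e _ => ?_
      by_cases h : s e = i
      · subst h
        simp [castEnd, hA', hB', LinearMap.restrict_apply]
      · simp [h]
    have hcoeQ : ((Q i u : U i) : V i) =
        (∑ e : E, if h : t e = i then castEnd V h (A e ∘ₗ B e) else 0) (u : V i) := by
      rw [hQ]
      simp only [LinearMap.sum_apply, Submodule.coe_sum]
      refine Finset.sum_congr rfl fun e _ => ?_
      by_cases h : t e = i
      · subst h
        simp [castEnd, hA', hB', LinearMap.restrict_apply]
      · simp [h]
    simp only [LinearMap.sub_apply, LinearMap.smul_apply, LinearMap.id_apply,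
      AddSubgroupClass.coe_sub, SetLike.val_smul] at *
    rw [hcoeP, hcoeQ]
    rw [LinearMap.add_apply, LinearMap.comp_apply, hJu, map_zero, zero_add] at hm
    exact hm
  -- traces
  have htrP : ∑ i : I, LinearMap.trace K (U i) (P i) =
      ∑ e : E, LinearMap.trace K (U (s e)) (B' e ∘ₗ A' e) := by
    rw [hP]
    simp only [map_sum]
    rw [Finset.sum_comm]
    refine Finset.sum_congr rfl fun e _ => ?_
    have : ∀ i : I, LinearMap.trace K (U i)
        (if h : s e = i then castEnd (fun j => ↥(U j)) h (B' e ∘ₗ A' e) else 0) =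
        if s e = i then LinearMap.trace K (U (s e)) (B' e ∘ₗ A' e) else 0 := by
      intro i
      by_cases h : s e = i
      · subst h; simp [castEnd]
      · simp [h]
    rw [Finset.sum_congr rfl fun i _ => this i, Finset.sum_ite_eq]
    simp
  have htrQ : ∑ i : I, LinearMap.trace K (U i) (Q i) =
      ∑ e : E, LinearMap.trace K (U (t e)) (A' e ∘ₗ B' e) := by
    rw [hQ]
    simp only [map_sum]
    rw [Finset.sum_comm]
    refine Finset.sum_congr rfl fun e _ => ?_
    have : ∀ i : I, LinearMap.trace K (U i)
        (if h : t e = i then castEnd (fun j => ↥(U j)) h (A' e ∘ₗ B' e) else 0) =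
        if t e = i then LinearMap.trace K (U (t e)) (A' e ∘ₗ B' e) else 0 := by
      intro i
      by_cases h : t e = i
      · subst h; simp [castEnd]
      · simp [h]
    rw [Finset.sum_congr rfl fun i _ => this i, Finset.sum_ite_eq]
    simp
  have htr : lam * ((∑ i : I, finrank K (U i) : ℕ) : K) = 0 := by
    have h1 : ∑ i : I, LinearMap.trace K (U i) (P i - Q i) =
        lam * ((∑ i : I, finrank K (U i) : ℕ) : K) := by
      rw [Nat.cast_sum, Finset.mul_sum]
      refine Finset.sum_congr rfl fun i _ => ?_
      rw [key i, map_smul, LinearMap.trace_id]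
      simp [smul_eq_mul]
    have h2 : ∑ i : I, LinearMap.trace K (U i) (P i - Q i) = 0 := by
      simp only [map_sub, Finset.sum_sub_distrib, htrP, htrQ]
      rw [sub_eq_zero]
      exact Finset.sum_congr rfl fun e _ => LinearMap.trace_comp_comm' (A' e) (B' e)
    rw [← h1, h2]
  have hn0 : (∑ i : I, finrank K (U i)) = 0 := by
    have hcast : ((∑ i : I, finrank K (U i) : ℕ) : K) = 0 :=
      (mul_eq_zero.mp htr).resolve_left hlam
    rcases hchar with h | h
    · haveI : CharZero K := (CharP.ringChar_zero_iff_CharZero (R := K)).mp h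
      exact_mod_cast hcast
    · have hle : (∑ i : I, finrank K (U i)) ≤ ∑ i : I, finrank K (V i) :=
        Finset.sum_le_sum fun i _ => Submodule.finrank_le (U i)
      exact Nat.eq_zero_of_dvd_of_lt (ringChar.dvd hcast) (lt_of_le_of_lt hle h)
  -- hence each U i is trivial
  have hUbot : ∀ i : I, U i = ⊥ := by
    intro i
    have := (Finset.sum_eq_zero_iff.mp hn0) i (Finset.mem_univ i)
    exact Submodule.finrank_eq_zero.mp this
  intro i
  ext x
  have hx : (g i).toLinearMap x - x ∈ U i := ⟨x, by simp⟩
  rw [hUbot i, Submodule.mem_bot, sub_eq_zero] at hx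
  simpa using hx
end
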